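/- Let f : (0,∞) → ℝ be twice continuously differentiable and x, x* > 0. Then f(x) = f(x*) + f'(x*)(x − x*) + ∫_0^{x*} f''(K)(K − x)⁺ dK + ∫_{x*}^{∞} f''(K)(x − K)⁺ dK, provided f''·(K−x)⁺ is integrable on (0, x*) and f''·(x−K)⁺ is integrable on (x*, ∞). -/

import Mathlib

open MeasureTheory Set

lemma cm_aux (f f' f'' : ℝ → ℝ)
    (hf' : ∀ y ∈ Ioi (0 : ℝ), HasDerivAt f (f' y) y)
    (hf'' : ∀ y ∈ Ioi (0 : ℝ), HasDerivAt f' (f'' y) y)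
    (hcont : ContinuousOn f'' (Ioi (0 : ℝ)))
    (a b c : ℝ) (ha : 0 < a) (hab : a ≤ b) :
    ∫ K in a..b, f'' K * (c - K)
      = (f b + f' b * (c - b)) - (f a + f' a * (c - a)) := by
  have hsub : uIcc a b ⊆ Ioi (0 : ℝ) := by
    rw [uIcc_of_le hab]
    intro t ht
    exact lt_of_lt_of_le ha ht.1
  have hderiv : ∀ t ∈ uIcc a b,
      HasDerivAt (fun K => f K + f' K * (c - K)) (f'' t * (c - t)) t := by
    intro t ht
    have h1 := hf' t (hsub ht)
    have h2 := hf'' t (hsub ht)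
    have h3 : HasDerivAt (fun K : ℝ => c - K) (-1) t := by
      simpa using (hasDerivAt_id t).const_sub c
    have h4 : HasDerivAt (fun K => f K + f' K * (c - K)) (f' t + (f'' t * (c - t) + f' t * -1)) t := h1.add (h2.mul h3)
    convert h4 using 1
    ring
  have hint : IntervalIntegrable (fun K => f'' K * (c - K)) volume a b :=
    ((hcont.mono hsub).mul ((continuous_const.sub continuous_id).continuousOn)).intervalIntegrable
  exact intervalIntegral.integral_eq_sub_of_hasDerivAt hderiv hint

theorem carr_madan_representation
    (f f' f'' : ℝ → ℝ) (x xs : ℝ) (hx : 0 < x) (hxs : 0 < xs)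
    (hf' : ∀ y ∈ Ioi (0 : ℝ), HasDerivAt f (f' y) y)
    (hf'' : ∀ y ∈ Ioi (0 : ℝ), HasDerivAt f' (f'' y) y)
    (hcont : ContinuousOn f'' (Ioi (0 : ℝ)))
    (hint1 : IntegrableOn (fun K => f'' K * max (K - x) 0) (Ioo 0 xs))
    (hint2 : IntegrableOn (fun K => f'' K * max (x - K) 0) (Ioi xs)) :
    f x = f xs + f' xs * (x - xs)
      + (∫ K in Ioo (0 : ℝ) xs, f'' K * max (K - x) 0)
      + ∫ K in Ioi xs, f'' K * max (x - K) 0 := by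
  rcases le_total x xs with hle | hle
  · -- x ≤ xs
    have h2 : (∫ K in Ioi xs, f'' K * max (x - K) 0) = 0 := by
      rw [setIntegral_congr_fun measurableSet_Ioi
        (g := fun _ => (0 : ℝ)) (fun K hK => by
          rw [max_eq_right (by simp only [mem_Ioi] at hK; linarith), mul_zero])]
      simp
    have heq : (fun K => f'' K * max (K - x) 0)
        = (Ioi x).indicator (fun K => f'' K * (K - x)) := by
      funext K
      by_cases h : x < K
      · rw [indicator_of_mem (mem_Ioi.mpr h), max_eq_left (by linarith)]
      · push_neg at h
        rw [indicator_of_notMem (by simpa using h), max_eq_right (by linarith), mul_zero]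
    have hset : Ioo 0 xs ∩ Ioi x = Ioo x xs := by
      ext t
      simp only [mem_inter_iff, mem_Ioo, mem_Ioi]
      constructor
      · rintro ⟨⟨_, ht2⟩, ht3⟩; exact ⟨ht3, ht2⟩
      · rintro ⟨ht1, ht2⟩; exact ⟨⟨hx.trans ht1, ht2⟩, ht1⟩
    have h1 : (∫ K in Ioo (0 : ℝ) xs, f'' K * max (K - x) 0)
        = ∫ K in x..xs, f'' K * (K - x) := by
      rw [heq, setIntegral_indicator measurableSet_Ioi, hset,
        ← integral_Ioc_eq_integral_Ioo, ← intervalIntegral.integral_of_le hle]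
    have hneg : (∫ K in x..xs, f'' K * (K - x)) = -∫ K in x..xs, f'' K * (x - K) := by
      rw [← intervalIntegral.integral_neg]
      exact intervalIntegral.integral_congr (fun K _ => by ring)
    have haux := cm_aux f f' f'' hf' hf'' hcont x xs x hx hle
    rw [h1, h2, hneg, haux]
    ring
  · -- xs ≤ x
    have h1 : (∫ K in Ioo (0 : ℝ) xs, f'' K * max (K - x) 0) = 0 := by
      rw [setIntegral_congr_fun measurableSet_Ioo
        (g := fun _ => (0 : ℝ)) (fun K hK => by
          rw [max_eq_right (by simp only [mem_Ioo] at hK; linarith [hK.2]), mul_zero])]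
      simp
    have heq : (fun K => f'' K * max (x - K) 0)
        = (Iio x).indicator (fun K => f'' K * (x - K)) := by
      funext K
      by_cases h : K < x
      · rw [indicator_of_mem (mem_Iio.mpr h), max_eq_left (by linarith)]
      · push_neg at h
        rw [indicator_of_notMem (by simpa using h), max_eq_right (by linarith), mul_zero]
    have hset : Ioi xs ∩ Iio x = Ioo xs x := by
      ext t
      simp only [mem_inter_iff, mem_Ioi, mem_Iio, mem_Ioo]
    have h2 : (∫ K in Ioi xs, f'' K * max (x - K) 0)
        = ∫ K in xs..x, f'' K * (x - K) := by
      rw [heq, setIntegral_indicator measurableSet_Iio, hset,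
        ← integral_Ioc_eq_integral_Ioo, ← intervalIntegral.integral_of_le hle]
    have haux := cm_aux f f' f'' hf' hf'' hcont xs x x hxs hle
    rw [h1, h2, haux]
    ring
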